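/- Let $p$ be a prime and let a group $G$ act on a group $K$ preserving an N-series $K_+=(K_m)_{m\geq 1}$ satisfying $(K_m)^p\subseteq K_{mp}$ for all $m\geq 1$ (an N$_p$-series). Then the Johnson filtration $G_m=\mathcal{F}_m^{K_*}(G)$ satisfies $(G_m)^p\subseteq G_{mp}$ for all $m\geq 1$, i.e., its positive part is an N$_p$-series. -/

import Mathlib

open scoped commutatorElement

namespace JohnsonNpProof

variable {K : Type*} [Group K]

/-- Difference operator on `ℕ`-indexed sequences in a group. -/
def D (F : ℕ → K) : ℕ → K := fun r => F (r + 1) * (F r)⁻¹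

lemma D_iter_succ (s : ℕ) (F : ℕ → K) : D^[s + 1] F = D^[s] (D F) :=
  Function.iterate_succ_apply D s F

lemma D_iter_succ' (s : ℕ) (F : ℕ → K) : D^[s + 1] F = D (D^[s] F) :=
  Function.iterate_succ_apply' D s F

lemma D_rec (F : ℕ → K) (s r : ℕ) :
    D^[s] F (r + 1) = D^[s + 1] F r * D^[s] F r := by
  rw [D_iter_succ']
  show D^[s] F (r + 1) = D^[s] F (r + 1) * (D^[s] F r)⁻¹ * D^[s] F r
  group

lemma D_iter_mem (H : Subgroup K) {F : ℕ → K} (h : ∀ r, F r ∈ H) :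
    ∀ s r, D^[s] F r ∈ H := by
  intro s
  induction s with
  | zero => simpa using h
  | succ s ih =>
      intro r
      rw [D_iter_succ']
      exact mul_mem (ih (r + 1)) (inv_mem (ih r))

lemma D_shift (s : ℕ) (F : ℕ → K) :
    D^[s] (fun r => F (r + 1)) = fun r => D^[s] F (r + 1) := by
  induction s generalizing F with
  | zero => rfl
  | succ s ih =>
      rw [D_iter_succ, D_iter_succ]
      have h1 : D (fun r => F (r + 1)) = (fun r => D F (r + 1)) := rfl
      rw [h1, ih (D F)]

lemma D_one : D (fun _ => (1 : K)) = fun _ => 1 := by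
  funext r; simp [D]

lemma D_iter_one : ∀ s, D^[s] (fun _ => (1 : K)) = fun _ => 1 := by
  intro s
  induction s with
  | zero => rfl
  | succ s ih => rw [D_iter_succ, D_one, ih]

lemma D_pow_choose (y : K) (e : ℕ) :
    D (fun r => y ^ r.choose (e + 1)) = fun r => y ^ r.choose e := by
  funext r
  show y ^ (r + 1).choose (e + 1) * (y ^ r.choose (e + 1))⁻¹ = y ^ r.choose e
  rw [Nat.choose_succ_succ, pow_add, mul_inv_cancel_right]

lemma D_pow_choose_zero (y : K) :
    D (fun r => y ^ r.choose 0) = fun _ => 1 := by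
  funext r
  show y ^ (r + 1).choose 0 * (y ^ r.choose 0)⁻¹ = 1
  simp

lemma D_pow_choose_le (y : K) :
    ∀ j e, j ≤ e → D^[j] (fun r => y ^ r.choose e) = fun r => y ^ r.choose (e - j) := by
  intro j
  induction j with
  | zero => intro e _; simp
  | succ j ih =>
      intro e hj
      obtain ⟨e', rfl⟩ : ∃ e', e = e' + 1 := ⟨e - 1, by omega⟩
      rw [D_iter_succ, D_pow_choose, ih e' (by omega)]
      have he : e' + 1 - (j + 1) = e' - j := by omega
      rw [he]

lemma D_pow_choose_gt (y : K) (e s : ℕ) (h : e < s) :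
    D^[s] (fun r => y ^ r.choose e) = fun _ => 1 := by
  obtain ⟨j, rfl⟩ : ∃ j, s = j + (e + 1) := ⟨s - (e + 1), by omega⟩
  rw [Function.iterate_add_apply]
  have htop : D^[e + 1] (fun r => y ^ r.choose e) = fun _ => (1 : K) := by
    rw [D_iter_succ', D_pow_choose_le y e e le_rfl]
    simpa using D_pow_choose_zero y
  rw [htop, D_iter_one]

/-- membership class: all iterated differences up to order `s` lie suitably deep. -/
def PP (W : ℕ → Subgroup K) (s a : ℕ) (F : ℕ → K) : Prop :=
  ∀ s', s' ≤ s → ∀ r, D^[s'] F r ∈ W (a + s')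

/-- conjugator class: positive iterated differences lie suitably deep. -/
def QQ (W : ℕ → Subgroup K) (s : ℕ) (H : ℕ → K) : Prop :=
  ∀ s', 1 ≤ s' → s' ≤ s → ∀ r, D^[s'] H r ∈ W s'

section PPQQ

variable (W : ℕ → Subgroup K)

lemma PP_mono {s s' a : ℕ} {F : ℕ → K} (h : PP W s a F) (hs : s' ≤ s) : PP W s' a F :=
  fun u hu r => h u (le_trans hu hs) r

lemma PP_anti (hanti : ∀ i j : ℕ, i ≤ j → W j ≤ W i) {s a a' : ℕ} {F : ℕ → K}
    (ha : a' ≤ a) (h : PP W s a F) : PP W s a' F :=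
  fun u hu r => hanti _ _ (by omega) (h u hu r)

lemma PP_D {s a : ℕ} {F : ℕ → K} (h : PP W (s + 1) a F) : PP W s (a + 1) (D F) := by
  intro s' hs' r
  have h1 : D^[s'] (D F) r = D^[s' + 1] F r := by rw [← D_iter_succ]
  rw [h1]
  have h2 : a + 1 + s' = a + (s' + 1) := by omega
  rw [h2]
  exact h (s' + 1) (by omega) r

lemma PP_build {s a : ℕ} {F : ℕ → K} (hv : ∀ r, F r ∈ W a)
    (h : PP W s (a + 1) (D F)) : PP W (s + 1) a F := by
  intro s' hs' r
  match s' with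
  | 0 => simpa using hv r
  | (u + 1) =>
      rw [D_iter_succ]
      have h2 : a + (u + 1) = a + 1 + u := by omega
      rw [h2]
      exact h u (by omega) r

lemma PP_shift {s a : ℕ} {F : ℕ → K} (h : PP W s a F) :
    PP W s a (fun r => F (r + 1)) := by
  intro s' hs' r
  rw [D_shift]
  exact h s' hs' (r + 1)

lemma QQ_of_PP (hanti : ∀ i j : ℕ, i ≤ j → W j ≤ W i) {s a : ℕ} {F : ℕ → K}
    (h : PP W s a F) : QQ W s F :=
  fun s' _ hs' r => hanti _ _ (by omega) (h s' hs' r)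

lemma QQ_shift {s : ℕ} {H : ℕ → K} (h : QQ W s H) :
    QQ W s (fun r => H (r + 1)) := by
  intro s' h1 hs' r
  rw [D_shift]
  exact h s' h1 hs' (r + 1)

lemma QQ_mono {s s' : ℕ} {H : ℕ → K} (h : QQ W s H) (hs : s' ≤ s) : QQ W s' H :=
  fun u h1 hu r => h u h1 (le_trans hu hs) r

lemma PP_of_QQ_D {s : ℕ} {H : ℕ → K} (h : QQ W (s + 1) H) : PP W s 1 (D H) := by
  intro s' hs' r
  have h1 : D^[s'] (D H) r = D^[s' + 1] H r := by rw [← D_iter_succ]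
  rw [h1]
  have h2 : 1 + s' = s' + 1 := by omega
  rw [h2]
  exact h (s' + 1) (by omega) (by omega) r

end PPQQ

section Identities

lemma ID1 (F G : ℕ → K) :
    D (fun r => F r * G r) =
      fun r => (F (r + 1) * D G r * (F (r + 1))⁻¹) * D F r := by
  funext r
  simp only [D]
  group

lemma ID2 (F : ℕ → K) :
    D (fun r => (F r)⁻¹) =
      fun r => (F (r + 1))⁻¹ * (D F r)⁻¹ * ((F (r + 1))⁻¹)⁻¹ := by
  funext r
  simp only [D]
  group

lemma ID3 (F H : ℕ → K) :
    D (fun r => H r * F r * (H r)⁻¹) =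
      fun r => (H (r + 1) * D F r * (H (r + 1))⁻¹) *
        ⁅H (r + 1) * F r * (H (r + 1))⁻¹, (D H r)⁻¹⁆ := by
  funext r
  simp only [D, commutatorElement_def]
  group

lemma ID4 (F G : ℕ → K) :
    D (fun r => ⁅F r, G r⁆) =
      fun r => (D F r * ⁅F r, D G r⁆ * (D F r)⁻¹) *
        ⁅D F r * D G r, ⁅F r, G r⁆⁆ *
        (⁅F r, G r⁆ * ⁅D F r, G (r + 1)⁆ * ⁅F r, G r⁆⁻¹) := by
  funext r
  simp only [D, commutatorElement_def]
  group

end Identities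

/-- The Lazard-style difference calculus: the classes `PP` are closed under
pointwise products, inverses, conjugation and (with degree addition) commutators. -/
theorem calc4 (W : ℕ → Subgroup K)
    (hanti : ∀ i j : ℕ, i ≤ j → W j ≤ W i)
    (hnorm : ∀ (j : ℕ) (x : K), x ∈ W j → ∀ y : K, y * x * y⁻¹ ∈ W j)
    (hcomm : ∀ (i j : ℕ) (x y : K), x ∈ W i → y ∈ W j → ⁅x, y⁆ ∈ W (i + j)) :
    ∀ s : ℕ,
      (∀ a b (F G : ℕ → K), PP W s a F → PP W s b G →
        PP W s (min a b) (fun r => F r * G r)) ∧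
      (∀ a (F : ℕ → K), PP W s a F → PP W s a (fun r => (F r)⁻¹)) ∧
      (∀ a (F H : ℕ → K), PP W s a F → QQ W s H →
        PP W s a (fun r => H r * F r * (H r)⁻¹)) ∧
      (∀ a b (F G : ℕ → K), PP W s a F → PP W s b G →
        PP W s (a + b) (fun r => ⁅F r, G r⁆)) := by
  intro s
  induction s with
  | zero =>
      refine ⟨?_, ?_, ?_, ?_⟩
      · intro a b F G hF hG s' hs' r
        have hs0 : s' = 0 := by omega
        subst hs0
        simp only [Function.iterate_zero, id_eq]
        have h1 : F r ∈ W (min a b) := hanti (min a b) a (by omega) (by simpa using hF 0 le_rfl r)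
        have h2 : G r ∈ W (min a b) := hanti (min a b) b (by omega) (by simpa using hG 0 le_rfl r)
        simpa using mul_mem h1 h2
      · intro a F hF s' hs' r
        have hs0 : s' = 0 := by omega
        subst hs0
        simp only [Function.iterate_zero, id_eq]
        simpa using inv_mem (show F r ∈ W a by simpa using hF 0 le_rfl r)
      · intro a F H hF hH s' hs' r
        have hs0 : s' = 0 := by omega
        subst hs0
        simp only [Function.iterate_zero, id_eq]
        simpa using hnorm a (F r) (by simpa using hF 0 le_rfl r) (H r)
      · intro a b F G hF hG s' hs' r
        have hs0 : s' = 0 := by omega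
        subst hs0
        simp only [Function.iterate_zero, id_eq]
        simpa using hcomm a b (F r) (G r) (by simpa using hF 0 le_rfl r)
          (by simpa using hG 0 le_rfl r)
  | succ s ih =>
      obtain ⟨ihmul, ihinv, ihconj, ihcomm⟩ := ih
      have hmul : ∀ a b (F G : ℕ → K), PP W (s+1) a F → PP W (s+1) b G →
          PP W (s+1) (min a b) (fun r => F r * G r) := by
        intro a b F G hF hG
        refine PP_build W (fun r => ?_) ?_
        · have h1 : F r ∈ W (min a b) := hanti (min a b) a (by omega) (by simpa using hF 0 (by omega) r)
          have h2 : G r ∈ W (min a b) := hanti (min a b) b (by omega) (by simpa using hG 0 (by omega) r)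
          exact mul_mem h1 h2
        · rw [ID1]
          have hX1 : PP W s (b + 1) (fun r => F (r + 1) * D G r * (F (r + 1))⁻¹) :=
            ihconj (b+1) (D G) (fun r => F (r+1)) (PP_D W hG)
              (QQ_shift W (QQ_of_PP W hanti (PP_mono W hF (by omega))))
          have hX2 : PP W s (a + 1) (D F) := PP_D W hF
          have h := ihmul (b+1) (a+1) _ _ hX1 hX2
          have hm : min (b+1) (a+1) = min a b + 1 := by omega
          rw [hm] at h
          exact h
      have hinv : ∀ a (F : ℕ → K), PP W (s+1) a F → PP W (s+1) a (fun r => (F r)⁻¹) := by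
        intro a F hF
        refine PP_build W (fun r => ?_) ?_
        · exact inv_mem (by simpa using hF 0 (by omega) r)
        · rw [ID2]
          have hC : QQ W s (fun r => (F (r + 1))⁻¹) := by
            have := ihinv a (fun r => F (r+1)) (PP_shift W (PP_mono W hF (by omega)))
            exact QQ_of_PP W hanti this
          have hX : PP W s (a + 1) (fun r => (D F r)⁻¹) := ihinv (a+1) (D F) (PP_D W hF)
          exact ihconj (a+1) (fun r => (D F r)⁻¹) (fun r => (F (r+1))⁻¹) hX hC
      have hconj : ∀ a (F H : ℕ → K), PP W (s+1) a F → QQ W (s+1) H →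
          PP W (s+1) a (fun r => H r * F r * (H r)⁻¹) := by
        intro a F H hF hH
        refine PP_build W (fun r => ?_) ?_
        · exact hnorm a (F r) (by simpa using hF 0 (by omega) r) (H r)
        · rw [ID3]
          have hQσ : QQ W s (fun r => H (r + 1)) := QQ_shift W (QQ_mono W hH (by omega))
          have hX1 : PP W s (a + 1) (fun r => H (r + 1) * D F r * (H (r + 1))⁻¹) :=
            ihconj (a+1) (D F) (fun r => H (r+1)) (PP_D W hF) hQσ
          have hFc : PP W s a (fun r => H (r + 1) * F r * (H (r + 1))⁻¹) :=
            ihconj a F (fun r => H (r+1)) (PP_mono W hF (by omega)) hQσ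
          have hDH : PP W s 1 (fun r => (D H r)⁻¹) := ihinv 1 (D H) (PP_of_QQ_D W hH)
          have hX2 : PP W s (a + 1) (fun r =>
              ⁅H (r + 1) * F r * (H (r + 1))⁻¹, (D H r)⁻¹⁆) :=
            ihcomm a 1 _ _ hFc hDH
          have h := ihmul (a+1) (a+1) _ _ hX1 hX2
          simpa using h
      refine ⟨hmul, hinv, hconj, ?_⟩
      intro a b F G hF hG
      refine PP_build W (fun r => ?_) ?_
      · exact hcomm a b (F r) (G r) (by simpa using hF 0 (by omega) r)
          (by simpa using hG 0 (by omega) r)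
      · rw [ID4]
        have hFs : PP W s a F := PP_mono W hF (by omega)
        have hGs : PP W s b G := PP_mono W hG (by omega)
        have hDF : PP W s (a + 1) (D F) := PP_D W hF
        have hDG : PP W s (b + 1) (D G) := PP_D W hG
        have hQDF : QQ W s (D F) := QQ_of_PP W hanti hDF
        have hT1 : PP W s (a + b + 1) (fun r => D F r * ⁅F r, D G r⁆ * (D F r)⁻¹) := by
          have hc : PP W s (a + (b + 1)) (fun r => ⁅F r, D G r⁆) := ihcomm a (b+1) _ _ hFs hDG
          have := ihconj (a + (b+1)) (fun r => ⁅F r, D G r⁆) (D F) hc hQDF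
          have hm : a + (b + 1) = a + b + 1 := by omega
          rw [hm] at this
          exact this
        have hT2 : PP W s (a + b + 1) (fun r => ⁅D F r * D G r, ⁅F r, G r⁆⁆) := by
          have hprod : PP W s (min (a+1) (b+1)) (fun r => D F r * D G r) :=
            ihmul (a+1) (b+1) _ _ hDF hDG
          have hcFG : PP W s (a + b) (fun r => ⁅F r, G r⁆) := ihcomm a b _ _ hFs hGs
          have := ihcomm (min (a+1) (b+1)) (a + b) _ _ hprod hcFG
          exact PP_anti W hanti (by omega) this
        have hT3 : PP W s (a + b + 1)
            (fun r => ⁅F r, G r⁆ * ⁅D F r, G (r + 1)⁆ * ⁅F r, G r⁆⁻¹) := by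
          have hGσ : PP W s b (fun r => G (r + 1)) := PP_shift W hGs
          have hc : PP W s (a + 1 + b) (fun r => ⁅D F r, G (r + 1)⁆) :=
            ihcomm (a+1) b _ _ hDF hGσ
          have hcFG : PP W s (a + b) (fun r => ⁅F r, G r⁆) := ihcomm a b _ _ hFs hGs
          have hQ : QQ W s (fun r => ⁅F r, G r⁆) := QQ_of_PP W hanti hcFG
          have := ihconj (a + 1 + b) (fun r => ⁅D F r, G (r + 1)⁆) (fun r => ⁅F r, G r⁆) hc hQ
          exact PP_anti W hanti (by omega) this
        have h12 : PP W s (a + b + 1) (fun r =>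
            (D F r * ⁅F r, D G r⁆ * (D F r)⁻¹) * ⁅D F r * D G r, ⁅F r, G r⁆⁆) := by
          have := ihmul (a+b+1) (a+b+1) _ _ hT1 hT2
          simpa using this
        have h123 := ihmul (a+b+1) (a+b+1) _ _ h12 hT3
        have hm : min (a+b+1) (a+b+1) = a + b + 1 := by omega
        rw [hm] at h123
        exact h123

section Cong

variable (Ng : Subgroup K)

lemma cong_trans {x y z : K} (h1 : x * y⁻¹ ∈ Ng) (h2 : y * z⁻¹ ∈ Ng) :
    x * z⁻¹ ∈ Ng := by
  have := mul_mem h1 h2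
  rwa [show x * y⁻¹ * (y * z⁻¹) = x * z⁻¹ by group] at this

lemma congD (hNnorm : ∀ x, x ∈ Ng → ∀ y : K, y * x * y⁻¹ ∈ Ng)
    {A B : ℕ → K} (h : ∀ r, A r * (B r)⁻¹ ∈ Ng) :
    ∀ r, D A r * (D B r)⁻¹ ∈ Ng := by
  intro r
  have key : D A r * (D B r)⁻¹ =
      (A (r + 1) * (B (r + 1))⁻¹) *
        ((B (r + 1) * (B r)⁻¹) * (A r * (B r)⁻¹)⁻¹ * (B (r + 1) * (B r)⁻¹)⁻¹) := by
    simp only [D]; group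
  rw [key]
  exact mul_mem (h (r + 1)) (hNnorm _ (inv_mem (h r)) _)

lemma congD_iter (hNnorm : ∀ x, x ∈ Ng → ∀ y : K, y * x * y⁻¹ ∈ Ng)
    {A B : ℕ → K} (h : ∀ r, A r * (B r)⁻¹ ∈ Ng) :
    ∀ s r, D^[s] A r * (D^[s] B r)⁻¹ ∈ Ng := by
  intro s
  induction s with
  | zero => simpa using h
  | succ s ih =>
      intro r
      rw [D_iter_succ' s A, D_iter_succ' s B]
      exact congD Ng hNnorm ih r

variable (Hg : Subgroup K)

lemma congMul1 (hNnorm : ∀ x, x ∈ Ng → ∀ y : K, y * x * y⁻¹ ∈ Ng)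
    (hswap : ∀ x y : K, x ∈ Hg → y ∈ Hg → ⁅x, y⁆ ∈ Ng)
    {A B : ℕ → K} (hA : ∀ r, A r ∈ Hg) (hB : ∀ r, B r ∈ Hg) :
    ∀ r, D (fun x => A x * B x) r * (D A r * D B r)⁻¹ ∈ Ng := by
  intro r
  have key : D (fun x => A x * B x) r * (D A r * D B r)⁻¹ =
      A (r + 1) * ⁅B (r + 1) * (B r)⁻¹, (A r)⁻¹⁆ * (A (r + 1))⁻¹ := by
    simp only [D, commutatorElement_def]; group
  rw [key]
  exact hNnorm _ (hswap _ _ (mul_mem (hB _) (inv_mem (hB _))) (inv_mem (hA _))) _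

lemma congInv1 (hswap : ∀ x y : K, x ∈ Hg → y ∈ Hg → ⁅x, y⁆ ∈ Ng)
    {A : ℕ → K} (hA : ∀ r, A r ∈ Hg) :
    ∀ r, D (fun x => (A x)⁻¹) r * D A r ∈ Ng := by
  intro r
  have key : D (fun x => (A x)⁻¹) r * D A r = ⁅(A (r + 1))⁻¹, A r⁆ := by
    simp only [D, commutatorElement_def]; group
  rw [key]
  exact hswap _ _ (inv_mem (hA _)) (hA _)

lemma cong_mul_iter (hNnorm : ∀ x, x ∈ Ng → ∀ y : K, y * x * y⁻¹ ∈ Ng)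
    (hswap : ∀ x y : K, x ∈ Hg → y ∈ Hg → ⁅x, y⁆ ∈ Ng)
    {A B : ℕ → K} (hA : ∀ r, A r ∈ Hg) (hB : ∀ r, B r ∈ Hg) :
    ∀ s r, D^[s] (fun x => A x * B x) r * (D^[s] A r * D^[s] B r)⁻¹ ∈ Ng := by
  intro s
  induction s generalizing A B with
  | zero =>
      intro r
      simp only [Function.iterate_zero, id_eq]
      have h : A r * B r * (A r * B r)⁻¹ = 1 := by group
      rw [h]
      exact one_mem Ng
  | succ s ih =>
      intro r
      have hDA : ∀ r, D A r ∈ Hg := fun r => mul_mem (hA _) (inv_mem (hA _))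
      have hDB : ∀ r, D B r ∈ Hg := fun r => mul_mem (hB _) (inv_mem (hB _))
      have P1 : D^[s] (D (fun x => A x * B x)) r *
          (D^[s] (fun x => D A x * D B x) r)⁻¹ ∈ Ng :=
        congD_iter Ng hNnorm (congMul1 Ng Hg hNnorm hswap hA hB) s r
      have P2 : D^[s] (fun x => D A x * D B x) r *
          (D^[s] (D A) r * D^[s] (D B) r)⁻¹ ∈ Ng := ih hDA hDB r
      have := cong_trans Ng P1 P2
      rw [D_iter_succ s (fun x => A x * B x), D_iter_succ s A, D_iter_succ s B]
      exact this

lemma cong_inv_iter (hNnorm : ∀ x, x ∈ Ng → ∀ y : K, y * x * y⁻¹ ∈ Ng)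
    (hswap : ∀ x y : K, x ∈ Hg → y ∈ Hg → ⁅x, y⁆ ∈ Ng)
    {A : ℕ → K} (hA : ∀ r, A r ∈ Hg) :
    ∀ s r, D^[s] (fun x => (A x)⁻¹) r * D^[s] A r ∈ Ng := by
  intro s
  induction s generalizing A with
  | zero =>
      intro r
      simp only [Function.iterate_zero, id_eq]
      have h : (A r)⁻¹ * A r = 1 := by group
      rw [h]
      exact one_mem Ng
  | succ s ih =>
      intro r
      have hDA : ∀ r, D A r ∈ Hg := fun r => mul_mem (hA _) (inv_mem (hA _))
      have P1 : D^[s] (D (fun x => (A x)⁻¹)) r *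
          (D^[s] (fun x => (D A x)⁻¹) r)⁻¹ ∈ Ng := by
        refine congD_iter Ng hNnorm (fun r => ?_) s r
        have := congInv1 Ng Hg hswap hA r
        rwa [show D (fun x => (A x)⁻¹) r * ((D A r)⁻¹)⁻¹
            = D (fun x => (A x)⁻¹) r * D A r by group]
      have P2 : D^[s] (fun x => (D A x)⁻¹) r * D^[s] (D A) r ∈ Ng := ih hDA r
      have key := mul_mem P1 P2
      rw [show D^[s] (D (fun x => (A x)⁻¹)) r * (D^[s] (fun x => (D A x)⁻¹) r)⁻¹ *
          (D^[s] (fun x => (D A x)⁻¹) r * D^[s] (D A) r)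
          = D^[s] (D (fun x => (A x)⁻¹)) r * D^[s] (D A) r by group] at key
      rw [D_iter_succ s (fun x => (A x)⁻¹), D_iter_succ s A]
      exact key

end Cong

end JohnsonNpProof

open JohnsonNpProof

/-- Let `p` be a prime and let a group `G` act on a group `K` preserving an
N-series `K₊` (extended by `K₀ = K₁ = K`) satisfying `(Kₘ)ᵖ ⊆ K_{mp}` for all
`m ≥ 1` (an N_p-series).  Then the Johnson filtration `Gₘ = 𝓕ₘ(G)` satisfies
`(Gₘ)ᵖ ⊆ G_{mp}` for all `m ≥ 1`: its positive part is an N_p-series. -/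
theorem johnson_filtration_Np {G K : Type*} [Group G] [Group K]
    (p : ℕ) (hp : p.Prime)
    (φ : G →* MulAut K) (Kf : ℕ → Subgroup K)
    (hK1 : Kf 1 = ⊤) (hK0 : Kf 0 = Kf 1)
    (hdesc : ∀ i, Kf (i + 1) ≤ Kf i)
    (hcomm : ∀ i j, 1 ≤ i → 1 ≤ j → ⁅Kf i, Kf j⁆ ≤ Kf (i + j))
    (hact : ∀ g n, ∀ k ∈ Kf n, φ g k ∈ Kf n)
    (hNp : ∀ m, 1 ≤ m → ∀ x ∈ Kf m, x ^ p ∈ Kf (m * p)) :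
    ∀ m, 1 ≤ m → ∀ g : G,
      (∀ n, ∀ k ∈ Kf n, φ g k * k⁻¹ ∈ Kf (m + n)) →
      (∀ n, ∀ k ∈ Kf n, φ (g ^ p) k * k⁻¹ ∈ Kf (m * p + n)) := by
  intro m hm g hg
  have hp2 : 2 ≤ p := hp.two_le
  -- basic facts about the filtration
  have hKanti : ∀ i j : ℕ, i ≤ j → Kf j ≤ Kf i := by
    intro i j hij
    induction hij with
    | refl => exact le_rfl
    | step h ih => exact le_trans (hdesc _) ih
  have Knorm : ∀ (d : ℕ) (x : K), x ∈ Kf d → ∀ y : K, y * x * y⁻¹ ∈ Kf d := by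
    have h1 : ∀ (d : ℕ) (x : K), x ∈ Kf (d + 1) → ∀ y : K, y * x * y⁻¹ ∈ Kf (d + 1) := by
      intro d x hx y
      have hy : y ∈ Kf 1 := by rw [hK1]; exact Subgroup.mem_top y
      have hc : ⁅y, x⁆ ∈ Kf (1 + (d + 1)) :=
        hcomm 1 (d + 1) le_rfl (by omega) (Subgroup.commutator_mem_commutator hy hx)
      have hc' : ⁅y, x⁆ ∈ Kf (d + 1) := hKanti (d + 1) (1 + (d + 1)) (by omega) hc
      have key : y * x * y⁻¹ = ⁅y, x⁆ * x := by group
      rw [key]; exact mul_mem hc' hx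
    intro d
    match d with
    | 0 =>
        intro x hx y
        rw [hK0] at hx ⊢
        exact h1 0 x hx y
    | (d + 1) => exact h1 d
  have KcommE : ∀ (c d : ℕ) (x y : K), 1 ≤ c → 1 ≤ d → x ∈ Kf c → y ∈ Kf d →
      ⁅x, y⁆ ∈ Kf (c + d) := fun c d x y hc hd hx hy =>
    hcomm c d hc hd (Subgroup.commutator_mem_commutator hx hy)
  -- reduce to n ≥ 1
  suffices main : ∀ n, 1 ≤ n → ∀ k ∈ Kf n, φ (g ^ p) k * k⁻¹ ∈ Kf (m * p + n) by
    intro n k hk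
    match n with
    | 0 =>
        rw [hK0] at hk
        have h := main 1 le_rfl k hk
        have h2 : Kf (m * p + 1) ≤ Kf (m * p + 0) := by
          have := hdesc (m * p)
          simpa using this
        exact h2 h
    | (n + 1) => exact main (n + 1) (by omega) k hk
  intro n hn k hk
  -- abbreviations
  let Vf : ℕ → Subgroup K := fun i => Kf (n + i * m)
  have hVanti : ∀ i j : ℕ, i ≤ j → Vf j ≤ Vf i := fun i j hij =>
    hKanti _ _ (Nat.add_le_add_left (Nat.mul_le_mul_right m hij) n)
  have hVpos : ∀ i : ℕ, 1 ≤ n + i * m := fun i => le_trans hn (Nat.le_add_right n _)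
  have hVf_le : ∀ A B C : ℕ, C ≤ A + B →
      Kf ((n + A * m) + (n + B * m)) ≤ Vf C := by
    intro A B C hC
    apply hKanti
    calc n + C * m ≤ n + (A + B) * m :=
          Nat.add_le_add_left (Nat.mul_le_mul_right m hC) n
      _ = n + (A * m + B * m) := by rw [Nat.add_mul]
      _ ≤ (n + n) + (A * m + B * m) := Nat.add_le_add_right (Nat.le_add_right n n) _
      _ = (n + A * m) + (n + B * m) := by ring
  let δ : K → K := fun z => φ g z * z⁻¹
  let t : ℕ → K := fun r => φ (g ^ r) k * k⁻¹
  have hφpow : ∀ (r : ℕ) (x : K), φ (g ^ (r + 1)) x = φ (g ^ r) (φ g x) := by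
    intro r x
    rw [pow_succ, map_mul]
    rfl
  have hDB : ∀ x : K, D (fun r => φ (g ^ r) x) = fun r => φ (g ^ r) (δ x) := by
    intro x; funext r
    show φ (g ^ (r + 1)) x * (φ (g ^ r) x)⁻¹ = φ (g ^ r) (φ g x * x⁻¹)
    rw [map_mul, map_inv, hφpow]
  have hDt : D t = fun r => φ (g ^ r) (δ k) := by
    funext r
    show (φ (g ^ (r + 1)) k * k⁻¹) * (φ (g ^ r) k * k⁻¹)⁻¹ = φ (g ^ r) (φ g k * k⁻¹)
    rw [map_mul, map_inv, hφpow]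
    group
  have hDtIter : ∀ s, D^[s + 1] t = fun r => φ (g ^ r) (δ^[s] (δ k)) := by
    intro s
    induction s with
    | zero => simpa using hDt
    | succ s ih =>
        rw [D_iter_succ', ih, hDB (δ^[s] (δ k))]
        rw [Function.iterate_succ_apply' δ s (δ k)]
  have hδmem : ∀ (d : ℕ) (z : K), z ∈ Kf d → δ z ∈ Kf (m + d) := fun d z hz => hg d z hz
  have hδiter : ∀ s, δ^[s] (δ k) ∈ Vf (s + 1) := by
    intro s
    induction s with
    | zero =>
        show δ k ∈ Kf (n + 1 * m)
        have he : n + 1 * m = m + n := by ring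
        rw [he]
        exact hg n k hk
    | succ s ih =>
        rw [Function.iterate_succ_apply']
        have h := hδmem _ _ ih
        have he : m + (n + (s + 1) * m) = n + (s + 1 + 1) * m := by ring
        rw [he] at h
        exact h
  have hBmem : ∀ (d : ℕ) (x : K), x ∈ Kf d → ∀ r, φ (g ^ r) x ∈ Kf d :=
    fun d x hx r => hact (g ^ r) d x hx
  have htval : ∀ r, t r ∈ Vf 1 := by
    intro r
    induction r with
    | zero =>
        show φ (g ^ 0) k * k⁻¹ ∈ Kf (n + 1 * m)
        rw [pow_zero, map_one]
        have : (1 : MulAut K) k * k⁻¹ = 1 := by simp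
        rw [this]
        exact one_mem _
    | succ r ih =>
        have hrec : t (r + 1) = D t r * t r := by
          show t (r + 1) = (t (r + 1) * (t r)⁻¹) * t r
          group
        rw [hrec, hDt]
        refine mul_mem ?_ ih
        have h := hBmem _ _ (hg n k hk) r
        have he : m + n = n + 1 * m := by ring
        rw [he] at h
        exact h
  -- the level-L series
  let Wl : ℕ → ℕ → Subgroup K := fun L j => Vf (max L (min j p))
  have hWanti : ∀ L, ∀ i j : ℕ, i ≤ j → Wl L j ≤ Wl L i := by
    intro L i j hij
    exact hVanti _ _ (by omega)
  have hWnorm : ∀ L (j : ℕ) (x : K), x ∈ Wl L j → ∀ y : K, y * x * y⁻¹ ∈ Wl L j :=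
    fun L j x hx y => Knorm _ x hx y
  have hWcomm : ∀ L, 1 ≤ L → ∀ (i j : ℕ) (x y : K), x ∈ Wl L i → y ∈ Wl L j →
      ⁅x, y⁆ ∈ Wl L (i + j) := by
    intro L hL i j x y hx hy
    have h1 : ⁅x, y⁆ ∈ Kf ((n + (max L (min i p)) * m) + (n + (max L (min j p)) * m)) :=
      KcommE _ _ x y (hVpos _) (hVpos _) hx hy
    exact hVf_le _ _ _ (by omega) h1
  -- the inductive claim
  let CL : ℕ → Prop := fun L => ∃ w : ℕ → K,
    (∀ s r, D^[s] w r ∈ Wl L s) ∧ w 0 = 1 ∧ t p * (w p)⁻¹ ∈ Kf (m * p + n)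
  have claim1 : CL 1 := by
    refine ⟨t, ?_, ?_, ?_⟩
    · intro s r
      match s with
      | 0 =>
          show t r ∈ Vf (max 1 (min 0 p))
          have hidx : max 1 (min 0 p) = 1 := by omega
          rw [hidx]
          exact htval r
      | (s + 1) =>
          rw [hDtIter s]
          show φ (g ^ r) (δ^[s] (δ k)) ∈ Vf (max 1 (min (s + 1) p))
          exact hVanti _ _ (by omega) (hBmem _ _ (hδiter s) r)
    · show φ (g ^ 0) k * k⁻¹ = 1
      rw [pow_zero, map_one]
      simp
    · have h : t p * (t p)⁻¹ = 1 := by group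
      rw [h]
      exact one_mem _
  -- the stage step
  have stage : ∀ L, 1 ≤ L → L + 1 ≤ p → CL L → CL (L + 1) := by
    intro L hL hLp hCL
    obtain ⟨w, hwP, hw0, hwacc⟩ := hCL
    have CALC := calc4 (Wl L) (hWanti L) (hWnorm L) (hWcomm L hL)
    have hNnorm : ∀ x, x ∈ Vf (L + 1) → ∀ y : K, y * x * y⁻¹ ∈ Vf (L + 1) :=
      fun x hx y => Knorm _ x hx y
    have hswap : ∀ x y : K, x ∈ Vf L → y ∈ Vf L → ⁅x, y⁆ ∈ Vf (L + 1) := by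
      intro x y hx hy
      have h1 : ⁅x, y⁆ ∈ Kf ((n + L * m) + (n + L * m)) :=
        KcommE _ _ x y (hVpos _) (hVpos _) hx hy
      exact hVf_le L L (L + 1) (by omega) h1
    -- peel off the binomial coefficients at level L, one at a time
    have peel : ∀ e, e ≤ L → ∃ w' : ℕ → K,
        (∀ s r, D^[s] w' r ∈ Wl L s) ∧ w' 0 = 1 ∧
        t p * (w' p)⁻¹ ∈ Kf (m * p + n) ∧
        (∀ j, 1 ≤ j → j ≤ e → D^[j] w' 0 ∈ Vf (L + 1)) := by
      intro e
      induction e with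
      | zero =>
          intro _
          exact ⟨w, hwP, hw0, hwacc, fun j h1 h2 => absurd (le_trans h1 h2) (by omega)⟩
      | succ e ih =>
          intro he
          obtain ⟨w', hP, h0, hacc, hcoef⟩ := ih (by omega)
          set y : K := D^[e + 1] w' 0 with hydef
          have hy : y ∈ Vf L := by
            have h := hP (e + 1) 0
            have hidx : max L (min (e + 1) p) = L := by omega
            show y ∈ Vf L
            rw [hydef]
            have h2 : D^[e + 1] w' 0 ∈ Vf (max L (min (e + 1) p)) := h
            rw [hidx] at h2
            exact h2
          have hEmem : ∀ s r, D^[s] (fun r => y ^ r.choose (e + 1)) r ∈ Wl L s := by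
            intro s r
            by_cases hs : s ≤ e + 1
            · rw [D_pow_choose_le y s (e + 1) hs]
              show y ^ (r.choose (e + 1 - s)) ∈ Vf (max L (min s p))
              exact hVanti _ _ (by omega) (pow_mem hy _)
            · rw [D_pow_choose_gt y (e + 1) s (by omega)]
              exact one_mem _
          have hE0 : y ^ ((0 : ℕ).choose (e + 1)) = 1 := by
            rw [Nat.choose_eq_zero_of_lt (by omega), pow_zero]
          have hEp : y ^ (p.choose (e + 1)) ∈ Kf (m * p + n) := by
            obtain ⟨c, hc⟩ := hp.dvd_choose_self (by omega : e + 1 ≠ 0) (by omega : e + 1 < p)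
            rw [hc, mul_comm p c, pow_mul]
            have h1 : y ^ c ∈ Kf (n + L * m) := pow_mem hy c
            have h2 := hNp (n + L * m) (hVpos L) _ h1
            refine hKanti _ _ ?_ h2
            have hA : m * p ≤ L * m * p := by
              calc m * p = 1 * (m * p) := by ring
                _ ≤ L * (m * p) := Nat.mul_le_mul_right _ hL
                _ = L * m * p := by ring
            have hB : n ≤ n * p := Nat.le_mul_of_pos_right n (by omega)
            calc m * p + n ≤ L * m * p + n * p := Nat.add_le_add hA hB
              _ = (n + L * m) * p := by ring
          refine ⟨fun r => (y ^ r.choose (e + 1))⁻¹ * w' r, ?_, ?_, ?_, ?_⟩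
          · intro s r
            have hPE : PP (Wl L) s 0 (fun r => y ^ r.choose (e + 1)) := by
              intro s' _ r'
              have h := hEmem s' r'
              have hz : (0 : ℕ) + s' = s' := by omega
              rw [hz]
              exact h
            have hPEi := (CALC s).2.1 0 (fun r => y ^ r.choose (e + 1)) hPE
            have hPw : PP (Wl L) s 0 w' := by
              intro s' _ r'
              have h := hP s' r'
              have hz : (0 : ℕ) + s' = s' := by omega
              rw [hz]
              exact h
            have h := (CALC s).1 0 0 _ _ hPEi hPw
            have h2 := h s le_rfl r
            have hz : (min 0 0) + s = s := by omega
            rw [hz] at h2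
            exact h2
          · show (y ^ ((0 : ℕ).choose (e + 1)))⁻¹ * w' 0 = 1
            rw [hE0, h0]
            group
          · have key : t p * ((y ^ (p.choose (e + 1)))⁻¹ * w' p)⁻¹ =
                (t p * (w' p)⁻¹) * y ^ (p.choose (e + 1)) := by group
            rw [key]
            exact mul_mem hacc hEp
          · intro j hj1 hje
            have hEv : ∀ r : ℕ, y ^ r.choose (e + 1) ∈ Vf L := fun r => pow_mem hy _
            have hEiv : ∀ r : ℕ, (y ^ r.choose (e + 1))⁻¹ ∈ Vf L := fun r => inv_mem (hEv r)
            have hwv : ∀ r, w' r ∈ Vf L := by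
              intro r
              have h := hP 0 r
              have hidx : max L (min 0 p) = L := by omega
              show w' r ∈ Vf L
              rw [← hidx]
              exact h
            have c1 := cong_mul_iter (Vf (L + 1)) (Vf L) hNnorm hswap hEiv hwv j 0
            have c2 := cong_inv_iter (Vf (L + 1)) (Vf L) hNnorm hswap hEv j 0
            have hXY : D^[j] (fun x => (y ^ x.choose (e + 1))⁻¹) 0 * D^[j] w' 0 ∈ Vf (L + 1) := by
              by_cases hcase : j ≤ e
              · have hE1 : D^[j] (fun r : ℕ => y ^ r.choose (e + 1)) 0 = 1 := by
                  rw [D_pow_choose_le y j (e + 1) (by omega)]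
                  show y ^ ((0 : ℕ).choose (e + 1 - j)) = 1
                  rw [Nat.choose_eq_zero_of_lt (by omega), pow_zero]
                have hX : D^[j] (fun x => (y ^ x.choose (e + 1))⁻¹) 0 ∈ Vf (L + 1) := by
                  have h := c2
                  rw [hE1, mul_one] at h
                  exact h
                exact mul_mem hX (hcoef j hj1 hcase)
              · have hj : j = e + 1 := by omega
                subst hj
                have hE1 : D^[e + 1] (fun r : ℕ => y ^ r.choose (e + 1)) 0 = y := by
                  rw [D_pow_choose_le y (e + 1) (e + 1) le_rfl]
                  show y ^ ((0 : ℕ).choose (e + 1 - (e + 1))) = y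
                  have hz : e + 1 - (e + 1) = 0 := by omega
                  rw [hz]
                  simp
                rw [hE1] at c2
                rw [← hydef]
                exact c2
            have h := mul_mem c1 hXY
            rw [show D^[j] (fun x => (y ^ x.choose (e + 1))⁻¹ * w' x) 0 *
                (D^[j] (fun x => (y ^ x.choose (e + 1))⁻¹) 0 * D^[j] w' 0)⁻¹ *
                (D^[j] (fun x => (y ^ x.choose (e + 1))⁻¹) 0 * D^[j] w' 0) =
                D^[j] (fun x => (y ^ x.choose (e + 1))⁻¹ * w' x) 0 by group] at h
            exact h
    obtain ⟨u, huP, hu0, huacc, hucoef⟩ := peel L le_rfl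
    -- all Newton coefficients of u at 0 now lie in Vf (L+1)
    have hy' : ∀ j, D^[j] u 0 ∈ Vf (L + 1) := by
      intro j
      rcases Nat.lt_or_ge j 1 with h1 | h1
      · have hj : j = 0 := by omega
        subst hj
        show u 0 ∈ Vf (L + 1)
        rw [hu0]
        exact one_mem _
      · rcases le_or_gt j L with h2 | h2
        · exact hucoef j h1 h2
        · have h := huP j 0
          exact hVanti _ _ (by omega) h
    -- the Pascal-recursion comparison function
    let vv : ℕ → ℕ → K := fun r =>
      Nat.rec (motive := fun _ => ℕ → K) (fun s => D^[s] u 0)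
        (fun _ ihv s => ihv (s + 1) * ihv s) r
    have hvv0 : ∀ s, vv 0 s = D^[s] u 0 := fun s => rfl
    have hvvS : ∀ r s, vv (r + 1) s = vv r (s + 1) * vv r s := fun r s => rfl
    have hvmem : ∀ r s, vv r s ∈ Vf (L + 1) := by
      intro r
      induction r with
      | zero => intro s; rw [hvv0]; exact hy' s
      | succ r ihv => intro s; rw [hvvS]; exact mul_mem (ihv (s + 1)) (ihv s)
    have hcongv : ∀ r s, D^[s] u r * (vv r s)⁻¹ ∈ Vf (L + 1) := by
      intro r
      induction r with
      | zero =>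
          intro s
          rw [hvv0]
          have h : D^[s] u 0 * (D^[s] u 0)⁻¹ = 1 := by group
          rw [h]
          exact one_mem _
      | succ r ihv =>
          intro s
          rw [D_rec u s r, hvvS]
          have h1 := ihv (s + 1)
          have h2 := ihv s
          have key : D^[s + 1] u r * D^[s] u r * (vv r (s + 1) * vv r s)⁻¹ =
              (D^[s + 1] u r * (vv r (s + 1))⁻¹) *
                (vv r (s + 1) * (D^[s] u r * (vv r s)⁻¹) * (vv r (s + 1))⁻¹) := by group
          rw [key]
          exact mul_mem h1 (hNnorm _ h2 _)
    have hupt : ∀ r, u r ∈ Vf (L + 1) := by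
      intro r
      have h := hcongv r 0
      have h2 := mul_mem h (hvmem r 0)
      rw [show D^[0] u r * (vv r 0)⁻¹ * vv r 0 = D^[0] u r by group] at h2
      exact h2
    refine ⟨u, ?_, hu0, huacc⟩
    intro s r
    by_cases hc : min s p ≤ L + 1
    · have hidx : max (L + 1) (min s p) = L + 1 := by omega
      show D^[s] u r ∈ Vf (max (L + 1) (min s p))
      rw [hidx]
      exact D_iter_mem _ hupt s r
    · have hidx : max (L + 1) (min s p) = max L (min s p) := by omega
      show D^[s] u r ∈ Vf (max (L + 1) (min s p))
      rw [hidx]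
      exact huP s r
  -- run the stages up to level p
  have claimP : ∀ L, 1 ≤ L → L ≤ p → CL L := by
    intro L hL
    induction L, hL using Nat.le_induction with
    | base => intro _; exact claim1
    | succ L hL ih =>
        intro hLp
        exact stage L hL hLp (ih (by omega))
  obtain ⟨w, hwP, hw0, hwacc⟩ := claimP p (by omega) le_rfl
  have hwp : w p ∈ Kf (m * p + n) := by
    have h := hwP 0 p
    have h2 : w p ∈ Kf (n + (max p (min 0 p)) * m) := h
    rw [show max p (min 0 p) = p by omega] at h2
    rw [show n + p * m = m * p + n by ring] at h2
    exact h2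
  have final := mul_mem hwacc hwp
  rw [show t p * (w p)⁻¹ * w p = t p by group] at final
  exact final
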